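/- Let A be a nonzero m×n real matrix and suppose that k GE steps (3 ≤ k ≤ min(m,n)) are performed on A with pivot qualities β_r = min(1/log(k−r+2), 1) for 1 ≤ r ≤ k (poor pivots early, good pivots late). Then the intermediate growth factor satisfies ρ_k(A) ≤ 2 · (log(k+2))^2 · (∏_{r=1}^{k−1} (log(r+2))^{1/r}) · √k · k^{(1/4)·log k}. -/

import Mathlib

open Finset Real
open Matrix

/-- One Gaussian elimination step on `A` with pivot position `(i, j)`:
`A_{st} - A_{sj} A_{it} / A_{ij}`. -/
noncomputable def geStep {m n : ℕ} (A : Matrix (Fin m) (Fin n) ℝ) (i : Fin m) (j : Fin n) :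
    Matrix (Fin m) (Fin n) ℝ :=
  Matrix.of fun s t => A s t - A s j * A i t / A i j

/-- The matrix `A^{(r)}` after `r` GE steps on `A`, where step `r` uses pivot
position `piv (r - 1)` (so `piv` is 0-indexed). -/
noncomputable def geIter {m n : ℕ} (A : Matrix (Fin m) (Fin n) ℝ)
    (piv : ℕ → Fin m × Fin n) : ℕ → Matrix (Fin m) (Fin n) ℝ
  | 0 => A
  | r + 1 => geStep (geIter A piv r) (piv r).1 (piv r).2

/-- Maximum absolute entry of a matrix. -/
noncomputable def maxAbs {m n : ℕ} (A : Matrix (Fin m) (Fin n) ℝ) : ℝ :=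
  ⨆ s, ⨆ t, |A s t|

/-- The magnitude `p_r = |A^{(r-1)}_{i_r j_r}|` of the `r`-th pivot (1-indexed `r`). -/
noncomputable def pivMag {m n : ℕ} (A : Matrix (Fin m) (Fin n) ℝ)
    (piv : ℕ → Fin m × Fin n) (r : ℕ) : ℝ :=
  |geIter A piv (r - 1) (piv (r - 1)).1 (piv (r - 1)).2|

section MaxAbs
variable {m n : ℕ} (A : Matrix (Fin m) (Fin n) ℝ)

lemma abs_le_maxAbs (s : Fin m) (t : Fin n) : |A s t| ≤ maxAbs A :=
  le_trans (le_ciSup (f := fun t' => |A s t'|) (Finite.bddAbove_range _) t)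
    (le_ciSup (f := fun s' => ⨆ t', |A s' t'|) (Finite.bddAbove_range _) s)

lemma exists_maxAbs (hm : 0 < m) (hn : 0 < n) : ∃ s t, maxAbs A = |A s t| := by
  have : Nonempty (Fin m) := ⟨⟨0, hm⟩⟩
  have : Nonempty (Fin n) := ⟨⟨0, hn⟩⟩
  obtain ⟨⟨s, t⟩, hst⟩ := Finite.exists_max (fun p : Fin m × Fin n => |A p.1 p.2|)
  refine ⟨s, t, le_antisymm ?_ (abs_le_maxAbs A s t)⟩
  exact ciSup_le fun s' => ciSup_le fun t' => hst (s', t')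

lemma maxAbs_nonneg (s : Fin m) (t : Fin n) : 0 ≤ maxAbs A :=
  le_trans (abs_nonneg _) (abs_le_maxAbs A s t)

end MaxAbs

/-- Weak Hadamard bound: `|det Q| ≤ (√q)^q c^q` when all entries are bounded by `c`. -/
lemma abs_det_le_hadamard {q : ℕ} (Q : Matrix (Fin q) (Fin q) ℝ) {c : ℝ} (hc : 0 ≤ c)
    (h : ∀ a b, |Q a b| ≤ c) : |Q.det| ≤ (Real.sqrt q) ^ q * c ^ q := by
  rcases Nat.eq_zero_or_pos q with hq | hq
  · subst hq; simp [Matrix.det_fin_zero]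
  have hps : (Qᴴ * Q).PosSemidef := Matrix.posSemidef_conjTranspose_mul_self Q
  have hherm := hps.1
  have hev := hps.eigenvalues_nonneg
  have htr : (Qᴴ * Q).trace = ∑ a, ∑ b, (Q b a) ^ 2 := by
    simp [Matrix.trace, Matrix.diag, Matrix.mul_apply, sq]
  have htr_le : (Qᴴ * Q).trace ≤ (q : ℝ) * ((q:ℝ) * c ^ 2) := by
    rw [htr]
    calc ∑ a, ∑ b, (Q b a) ^ 2 ≤ ∑ _a : Fin q, ∑ _b : Fin q, c ^ 2 := by
          refine Finset.sum_le_sum fun a _ => Finset.sum_le_sum fun b _ => ?_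
          nlinarith [h b a, abs_nonneg (Q b a), sq_abs (Q b a)]
      _ = (q : ℝ) * ((q:ℝ) * c ^ 2) := by simp [mul_assoc]
  -- sum of eigenvalues = trace
  have hsum : ∑ i, hherm.eigenvalues i = (Qᴴ * Q).trace := by
    rw [hherm.trace_eq_sum_eigenvalues]
    simp
  -- det = prod of eigenvalues
  have hdet : (Qᴴ * Q).det = ∏ i, hherm.eigenvalues i := by
    rw [hherm.det_eq_prod_eigenvalues]; norm_num
  -- AM-GM
  have hamgm : ∏ i, hherm.eigenvalues i ≤ ((Qᴴ * Q).trace / q) ^ q := by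
    have hq' : (0:ℝ) < q := by exact_mod_cast hq
    have h1 : ∏ i : Fin q, (hherm.eigenvalues i) ^ ((q:ℝ)⁻¹) ≤
        ∑ i : Fin q, (q:ℝ)⁻¹ * hherm.eigenvalues i :=
      Real.geom_mean_le_arith_mean_weighted Finset.univ _ _
        (fun i _ => by positivity) (by simp [Finset.card_univ]; field_simp)
        (fun i _ => hev i)
    have h2 : (∏ i, hherm.eigenvalues i) ^ ((q:ℝ)⁻¹) =
        ∏ i : Fin q, (hherm.eigenvalues i) ^ ((q:ℝ)⁻¹) := by
      rw [← Real.finset_prod_rpow _ _ (fun i _ => hev i)]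
    have h3 : ∑ i : Fin q, (q:ℝ)⁻¹ * hherm.eigenvalues i = (Qᴴ * Q).trace / q := by
      rw [← Finset.mul_sum, hsum]; ring
    have h4 : (∏ i, hherm.eigenvalues i) ^ ((q:ℝ)⁻¹) ≤ (Qᴴ * Q).trace / q := by
      rw [h2]; rw [h3] at h1; exact h1
    have hprod_nonneg : (0:ℝ) ≤ ∏ i, hherm.eigenvalues i :=
      Finset.prod_nonneg fun i _ => hev i
    calc ∏ i, hherm.eigenvalues i
        = ((∏ i, hherm.eigenvalues i) ^ ((q:ℝ)⁻¹)) ^ (q:ℕ) := by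
          rw [← Real.rpow_natCast ((∏ i, hherm.eigenvalues i) ^ ((q:ℝ)⁻¹)) q,
            ← Real.rpow_mul hprod_nonneg]
          rw [inv_mul_cancel₀ (ne_of_gt hq'), Real.rpow_one]
      _ ≤ ((Qᴴ * Q).trace / q) ^ q := by
          apply pow_le_pow_left₀ (Real.rpow_nonneg hprod_nonneg _) h4
  -- assemble
  have htrq : (Qᴴ * Q).trace / q ≤ (q:ℝ) * c ^ 2 := by
    rw [div_le_iff₀ (by exact_mod_cast hq)]
    linarith [htr_le]
  have hdet2 : (Q.det) ^ 2 = (Qᴴ * Q).det := by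
    rw [Matrix.det_mul]
    have : Qᴴ.det = Q.det := by
      rw [Matrix.det_conjTranspose]; simp
    rw [this]; ring
  have htrace_nonneg : 0 ≤ (Qᴴ * Q).trace / q := by
    have h0 : (0:ℝ) ≤ (Qᴴ * Q).trace := by
      rw [← hsum]; exact Finset.sum_nonneg (fun i _ => hev i)
    positivity
  have key : (Q.det) ^ 2 ≤ ((Real.sqrt q) ^ q * c ^ q) ^ 2 := by
    have e1 : ((Real.sqrt q) ^ q * c ^ q) ^ 2 = ((q:ℝ) * c ^ 2) ^ q := by
      rw [mul_pow, ← pow_mul, ← pow_mul, mul_comm q 2, pow_mul, pow_mul,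
        Real.sq_sqrt (by positivity : (0:ℝ) ≤ (q:ℝ))]
      rw [mul_pow]
    rw [e1, hdet2, hdet]
    calc ∏ i, hherm.eigenvalues i ≤ ((Qᴴ * Q).trace / q) ^ q := hamgm
      _ ≤ ((q:ℝ) * c ^ 2) ^ q := pow_le_pow_left₀ htrace_nonneg htrq q
  have habs : |Q.det| = Real.sqrt ((Q.det) ^ 2) := by
    rw [Real.sqrt_sq_eq_abs]
  rw [habs]
  calc Real.sqrt ((Q.det) ^ 2) ≤ Real.sqrt (((Real.sqrt q) ^ q * c ^ q) ^ 2) :=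
        Real.sqrt_le_sqrt key
    _ = |(Real.sqrt q) ^ q * c ^ q| := Real.sqrt_sq_eq_abs _
    _ = (Real.sqrt q) ^ q * c ^ q := abs_of_nonneg (by positivity)

/-- Determinant after one GE step with pivot at `(0,0)`. -/
lemma det_geStep {q : ℕ} (B : Matrix (Fin (q+1)) (Fin (q+1)) ℝ) (h : B 0 0 ≠ 0) :
    B.det = B 0 0 * ((geStep B 0 0).submatrix Fin.succ Fin.succ).det := by
  classical
  set u : Fin (q+1) → ℝ := fun s => if s = 0 then 0 else B s 0 / B 0 0 with hu
  set E : Matrix (Fin (q+1)) (Fin (q+1)) ℝ := 1 - Matrix.vecMulVec u (Pi.single 0 1) with hE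
  have hEtri : E.BlockTriangular OrderDual.toDual := by
    intro s t hst
    simp only [hE, Matrix.sub_apply, Matrix.one_apply, Matrix.vecMulVec_apply]
    have hst' : s < t := hst
    have hs0 : ¬ (s = t) := ne_of_lt hst'
    have ht0 : t ≠ 0 := by
      intro h0; subst h0; exact (Fin.not_lt_zero s) hst'
    rw [if_neg hs0, Pi.single_apply, if_neg ht0]
    ring
  have hdetE : E.det = 1 := by
    rw [Matrix.det_of_lowerTriangular E hEtri]
    have : ∀ i, E i i = 1 := by
      intro i
      simp only [hE, Matrix.sub_apply, Matrix.one_apply_eq, Matrix.vecMulVec_apply]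
      rcases eq_or_ne i 0 with rfl | hi
      · simp [hu]
      · rw [Pi.single_apply, if_neg (by exact fun hh => hi hh)]
        ring
    simp [this]
  -- compute E * B entrywise
  have hmulapp : ∀ s t, ((Matrix.vecMulVec u (Pi.single 0 1) : Matrix (Fin (q+1)) (Fin (q+1)) ℝ) * B) s t = u s * B 0 t := by
    intro s t
    rw [Matrix.mul_apply]
    rw [Finset.sum_eq_single (0 : Fin (q+1))]
    · simp [Matrix.vecMulVec_apply]
    · intro b _ hb
      simp [Matrix.vecMulVec_apply, Pi.single_apply, if_neg hb]
    · simp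
  have hEB : ∀ s t, (E * B) s t = B s t - u s * B 0 t := by
    intro s t
    rw [hE, Matrix.sub_mul, Matrix.one_mul, Matrix.sub_apply, hmulapp]
  have hdetEB : (E * B).det = B.det := by
    rw [Matrix.det_mul, hdetE, one_mul]
  -- column 0 of E * B
  have hcol : ∀ s, s ≠ 0 → (E * B) s 0 = 0 := by
    intro s hs
    rw [hEB, hu]
    simp only [if_neg hs]
    field_simp
    ring
  have hc00 : (E * B) 0 0 = B 0 0 := by
    rw [hEB]; simp [hu]
  -- Laplace expansion along column 0
  have hlap := Matrix.det_succ_column_zero (E * B)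
  have hcollapse : (E * B).det = B 0 0 * ((E * B).submatrix (Fin.succAbove 0) Fin.succ).det := by
    rw [hlap, Finset.sum_eq_single (0 : Fin (q+1))]
    · simp [hc00]
    · intro b _ hb
      rw [hcol b hb]; ring
    · simp
  -- identify the submatrix
  have hsub : (E * B).submatrix (Fin.succAbove 0) Fin.succ
      = (geStep B 0 0).submatrix Fin.succ Fin.succ := by
    ext a b
    have h1 : Fin.succAbove 0 a = Fin.succ a := by simp [Fin.succAbove]
    rw [Matrix.submatrix_apply, Matrix.submatrix_apply, h1, hEB]
    have hsucc : (Fin.succ a : Fin (q+1)) ≠ 0 := Fin.succ_ne_zero a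
    simp only [geStep, Matrix.of_apply, hu, if_neg hsucc]
    ring
  rw [← hdetEB, hcollapse, hsub]

/-- The bordered-determinant chain. -/
lemma det_chain {m n k : ℕ} (A : Matrix (Fin m) (Fin n) ℝ) (piv : ℕ → Fin m × Fin n)
    (hpiv : ∀ r < k, geIter A piv r (piv r).1 (piv r).2 ≠ 0)
    (R : ℕ → Fin m) (Cc : ℕ → Fin n)
    (hR : ∀ j, j < k → R j = (piv j).1) (hC : ∀ j, j < k → Cc j = (piv j).2) :
    ∀ e d, d + e = k →
      |(((geIter A piv (k - k)).submatrix (fun a : Fin (k+1) => R (k - k + ↑a))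
          (fun b : Fin (k+1) => Cc (k - k + ↑b))).det)|
        = (∏ r ∈ Finset.Icc 1 e, pivMag A piv r) *
          |(((geIter A piv (k - d)).submatrix (fun a : Fin (d+1) => R (k - d + ↑a))
            (fun b : Fin (d+1) => Cc (k - d + ↑b))).det)| := by
  intro e
  induction e with
  | zero =>
    intro d hd
    have hdk : d = k := by omega
    subst hdk
    simp
  | succ e ih =>
    intro d hd
    have hde : (d + 1) + e = k := by omega
    have hdk : d < k := by omega
    have key := ih (d + 1) hde
    -- the step relation between level d+1 and level d
    set B : Matrix (Fin (d+1+1)) (Fin (d+1+1)) ℝ :=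
      (geIter A piv (k - (d+1))).submatrix (fun a : Fin (d+1+1) => R (k - (d+1) + ↑a))
        (fun b : Fin (d+1+1) => Cc (k - (d+1) + ↑b)) with hB
    have hpivB : B 0 0 ≠ 0 := by
      have h1 : k - (d+1) + ((0 : Fin (d+1+1)) : ℕ) = k - (d+1) := by simp
      have h2 : k - (d + 1) < k := by omega
      simp only [hB, Matrix.submatrix_apply, h1]
      rw [hR _ h2, hC _ h2]
      exact hpiv _ h2
    have hstep := det_geStep B hpivB
    -- identify the shrunken matrix with level d
    have hsub : (geStep B 0 0).submatrix Fin.succ Fin.succ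
        = (geIter A piv (k - d)).submatrix (fun a : Fin (d+1) => R (k - d + ↑a))
            (fun b : Fin (d+1) => Cc (k - d + ↑b)) := by
      ext a b
      have hkd : k - d = (k - (d+1)) + 1 := by omega
      have hgi : geIter A piv (k - d)
          = geStep (geIter A piv (k - (d+1))) (piv (k - (d+1))).1 (piv (k - (d+1))).2 := by
        rw [hkd]; rfl
      have h2 : k - (d + 1) < k := by omega
      simp only [Matrix.submatrix_apply, hgi, geStep, Matrix.of_apply, hB]
      have e1 : k - (d+1) + ((Fin.succ a : Fin (d+1+1)) : ℕ) = k - d + ↑a := by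
        simp [Fin.val_succ]; omega
      have e2 : k - (d+1) + ((Fin.succ b : Fin (d+1+1)) : ℕ) = k - d + ↑b := by
        simp [Fin.val_succ]; omega
      have e3 : k - (d+1) + ((0 : Fin (d+1+1)) : ℕ) = k - (d+1) := by simp
      rw [e1, e2, e3, hR _ h2, hC _ h2]
    have hpm : pivMag A piv (e + 1) = |B 0 0| := by
      have h1 : k - (d+1) + ((0 : Fin (d+1+1)) : ℕ) = k - (d+1) := by simp
      have h2 : e + 1 - 1 = k - (d+1) := by omega
      have h3 : k - (d + 1) < k := by omega
      simp only [pivMag, h2, hB, Matrix.submatrix_apply, h1]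
      rw [hR _ h3, hC _ h3]
    rw [key, hstep, ← hsub]
    rw [abs_mul]
    rw [Finset.prod_Icc_succ_top (by omega : 1 ≤ e + 1)]
    rw [hpm]
    ring

/-- Wilkinson's telescoping argument, abstract form. -/
lemma wilkinson_telescope (k : ℕ) (S : ℕ → ℝ) (c : ℕ → ℝ)
    (h : ∀ i, i < k → S i ≤ ((k:ℝ) + 1 - i) * ((S i - S (i+1)) + c i)) :
    S k ≤ S 0 / ((k:ℝ)+1) + ∑ i ∈ Finset.range k, c i / ((k:ℝ) - i) := by
  have main : ∀ j, j ≤ k → S j / ((k:ℝ) + 1 - j) ≤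
      S 0 / ((k:ℝ)+1) + ∑ i ∈ Finset.range j, c i / ((k:ℝ) - i) := by
    intro j
    induction j with
    | zero => intro _; simp
    | succ j ih =>
      intro hj
      have hjk : j < k := by omega
      have ihj := ih (by omega)
      have hpos1 : (0:ℝ) < (k:ℝ) + 1 - j := by
        have : (j:ℝ) < k := by exact_mod_cast hjk
        linarith
      have hpos2 : (0:ℝ) < (k:ℝ) - j := by
        have : (j:ℝ) < k := by exact_mod_cast hjk
        linarith
      have hrec : S (j+1) / ((k:ℝ) - j) ≤ S j / ((k:ℝ) + 1 - j) + c j / ((k:ℝ) - j) := by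
        rw [div_add_div _ _ (ne_of_gt hpos1) (ne_of_gt hpos2), div_le_div_iff₀ hpos2
          (by positivity)]
        nlinarith [h j hjk]
      rw [Finset.sum_range_succ]
      calc S (j+1) / ((k:ℝ) + 1 - ((j+1 : ℕ):ℝ)) = S (j+1) / ((k:ℝ) - j) := by
            push_cast; ring_nf
        _ ≤ S j / ((k:ℝ) + 1 - j) + c j / ((k:ℝ) - j) := hrec
        _ ≤ S 0 / ((k:ℝ)+1) + ∑ i ∈ Finset.range j, c i / ((k:ℝ) - i) + c j / ((k:ℝ) - j) := by
            linarith
        _ = S 0 / ((k:ℝ)+1) + (∑ i ∈ Finset.range j, c i / ((k:ℝ) - i) + c j / ((k:ℝ) - j)) := by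
            ring
  have := main k le_rfl
  have e : (k:ℝ) + 1 - k = 1 := by ring
  rw [e, div_one] at this
  exact this

-- helper: log(x/y) lower bounds etc.
lemma log_ratio_ge {x y : ℝ} (hx : 0 < x) (hxy : x ≤ y) : Real.log y - Real.log x ≥ (y - x)/y := by
  have hy : 0 < y := lt_of_lt_of_le hx hxy
  have h1 : Real.log (x/y) ≤ x/y - 1 := Real.log_le_sub_one_of_pos (by positivity)
  rw [Real.log_div (ne_of_gt hx) (ne_of_gt hy)] at h1
  have : (y - x)/y = 1 - x/y := by field_simp
  linarith [this]

lemma log_ratio_le {x y : ℝ} (hx : 0 < x) (hxy : x ≤ y) : Real.log y - Real.log x ≤ (y - x)/x := by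
  have hy : 0 < y := lt_of_lt_of_le hx hxy
  have h1 : Real.log (y/x) ≤ y/x - 1 := Real.log_le_sub_one_of_pos (by positivity)
  rw [Real.log_div (ne_of_gt hy) (ne_of_gt hx)] at h1
  have : (y - x)/x = y/x - 1 := by field_simp
  linarith [this]

/-- Core analytic inequality. -/
lemma analytic_core (k : ℕ) (hk : 3 ≤ k) :
    Real.log ((k:ℝ)+1) / 2 + ∑ j ∈ Finset.range k, (Real.log ((j:ℝ)+2) / 2) / ((j:ℝ)+1)
      ≤ Real.log 2 + 2 * Real.log (Real.log ((k:ℝ)+2)) + Real.log k / 2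
        + Real.log k * Real.log k / 4 - 1/(k:ℝ) := by
  induction k, hk using Nat.le_induction with
  | base =>
    have sum3 : ∑ j ∈ Finset.range 3, (Real.log ((j:ℝ)+2) / 2) / ((j:ℝ)+1)
        = Real.log 2 / 2 + Real.log 3 / 4 + Real.log 4 / 6 := by
      rw [Finset.sum_range_succ, Finset.sum_range_succ, Finset.sum_range_succ,
        Finset.sum_range_zero]
      norm_num
      ring
    rw [sum3]
    have L2u : Real.log 2 < 0.6931471808 := Real.log_two_lt_d9
    have L2l : (0.6931471803:ℝ) < Real.log 2 := Real.log_two_gt_d9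
    have L4 : Real.log 4 = 2 * Real.log 2 := by
      rw [show (4:ℝ) = 2^2 by norm_num, Real.log_pow]; push_cast; ring
    have L3l : Real.log 2 + 1/3 ≤ Real.log 3 := by
      have := log_ratio_ge (x := 2) (y := 3) (by norm_num) (by norm_num)
      norm_num at this; linarith
    have L3u : Real.log 3 ≤ Real.log 2 + 1/2 := by
      have := log_ratio_le (x := 2) (y := 3) (by norm_num) (by norm_num)
      norm_num at this; linarith
    have L5l : (1.586:ℝ) ≤ Real.log 5 := by
      have := log_ratio_ge (x := 4) (y := 5) (by norm_num) (by norm_num)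
      norm_num at this
      linarith [L4, L2l]
    have LL5 : (0.369:ℝ) ≤ Real.log (Real.log 5) := by
      have h1 : Real.log (Real.log 5) ≥ 1 - 1/(Real.log 5) := by
        have h2 : Real.log (1/(Real.log 5)) ≤ 1/(Real.log 5) - 1 :=
          Real.log_le_sub_one_of_pos (by positivity)
        rw [Real.log_div (by norm_num) (by positivity), Real.log_one] at h2
        linarith
      have h3 : 1/(Real.log 5) ≤ 1/(1.586:ℝ) := by
        apply one_div_le_one_div_of_le (by norm_num) L5l
      have : (1:ℝ) - 1/1.586 ≥ 0.369 := by norm_num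
      linarith
    have e5 : ((3:ℕ):ℝ) + 2 = 5 := by norm_num
    have e4 : ((3:ℕ):ℝ) + 1 = 4 := by norm_num
    rw [e5, e4]
    have e3 : Real.log ((3:ℕ):ℝ) = Real.log 3 := by norm_num
    rw [e3]
    nlinarith [sq_nonneg (Real.log 3 - 1), L3l, L2l, L2u, LL5, L4]
  | succ k hk3 ih =>
    have hK3 : (3:ℝ) ≤ (k:ℝ) := by exact_mod_cast hk3
    have hKpos : (0:ℝ) < (k:ℝ) := by linarith
    rw [Finset.sum_range_succ]
    push_cast
    push_cast at ih
    set K := (k:ℝ) with hKdef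
    -- abbreviations
    have hapos : (0:ℝ) ≤ Real.log K := Real.log_nonneg (by linarith)
    have hba : Real.log K ≤ Real.log (K+1) := Real.log_le_log (by linarith) (by linarith)
    -- f1 : log(K+2) + log K ≤ 2 log(K+1)
    have f1 : Real.log (K+2) + Real.log K ≤ 2 * Real.log (K+1) := by
      have h1 : Real.log ((K+2) * K) = Real.log (K+2) + Real.log K :=
        Real.log_mul (by linarith) (by linarith)
      have h2 : Real.log ((K+1)^2) = 2 * Real.log (K+1) := by
        rw [Real.log_pow]; push_cast; ring
      have h3 : Real.log ((K+2) * K) ≤ Real.log ((K+1)^2) :=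
        Real.log_le_log (by nlinarith) (by nlinarith)
      linarith
    -- f2 : log(K+2) ≤ log K + 2/K
    have f2 : Real.log (K+2) ≤ Real.log K + 2/K := by
      have := log_ratio_le (x := K) (y := K+2) hKpos (by linarith)
      have e : (K + 2 - K)/K = 2/K := by ring
      linarith [e ▸ this]
    -- f3 : log(K+1) - log K ≥ 1/(K+1)
    have f3 : Real.log (K+1) - Real.log K ≥ 1/(K+1) := by
      have := log_ratio_ge (x := K) (y := K+1) hKpos (by linarith)
      have e : (K + 1 - K)/(K+1) = 1/(K+1) := by ring
      linarith [e ▸ this]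
    -- f5 : loglog monotone
    have f5 : Real.log (Real.log (K+2)) ≤ Real.log (Real.log (K+3)) := by
      have h0 : Real.log (Real.exp 1) ≤ Real.log (K+2) :=
        Real.log_le_log (Real.exp_pos 1) (by nlinarith [Real.exp_one_lt_d9])
      rw [Real.log_exp] at h0
      exact Real.log_le_log (by linarith) (Real.log_le_log (by linarith) (by linarith))
    -- f6 : (log K)/(K+1) ≤ (log(K+1)^2 - log K^2)/2
    have f6 : 2 * Real.log K / (K+1) ≤
        Real.log (K+1) * Real.log (K+1) - Real.log K * Real.log K := by
      have hKp1 : (0:ℝ) < K + 1 := by linarith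
      have expand : Real.log (K+1) * Real.log (K+1) - Real.log K * Real.log K
          = (Real.log (K+1) - Real.log K) * (Real.log (K+1) + Real.log K) := by ring
      rw [expand]
      have h1 : (Real.log (K+1) - Real.log K) * (Real.log (K+1) + Real.log K)
          ≥ (1/(K+1)) * (2 * Real.log K) := by
        apply mul_le_mul f3 (by linarith) (by linarith) (by linarith)
      calc 2 * Real.log K / (K+1) = (1/(K+1)) * (2 * Real.log K) := by ring
        _ ≤ _ := h1
    -- combine
    have hsum := ih
    have hKK1 : (0:ℝ) < K * (K+1) := by nlinarith
    -- target pieces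
    have step1 : Real.log (K+2)/2 - Real.log (K+1)/2
        ≤ (Real.log (K+1) - Real.log K)/2 := by linarith
    have step2 : (Real.log (K+2)/2)/(K+1) ≤ (Real.log K/2)/(K+1) + 1/(K*(K+1)) := by
      have e12 : (2:ℝ)/K = 2*(1/K) := by ring
      have h1 : Real.log (K+2)/2 ≤ Real.log K/2 + 1/K := by
        rw [e12] at f2; linarith
      have h2 : (Real.log (K+2)/2)/(K+1) ≤ (Real.log K/2 + 1/K)/(K+1) := by
        gcongr
      have h3 : (Real.log K/2 + 1/K)/(K+1) = (Real.log K/2)/(K+1) + 1/(K*(K+1)) := by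
        field_simp
      rw [h3] at h2
      linarith
    have step3 : (Real.log K/2)/(K+1)
        ≤ (Real.log (K+1) * Real.log (K+1) - Real.log K * Real.log K)/4 := by
      have : (Real.log K/2)/(K+1) = (2 * Real.log K / (K+1))/4 := by ring
      rw [this]
      linarith
    have step5 : 1/K - 1/(K+1) = 1/(K*(K+1)) := by
      field_simp
      ring
    have goalshape : Real.log (K + 1 + 1) = Real.log (K+2) := by congr 1; ring
    have goalshape2 : Real.log (K + 1 + 2) = Real.log (K+3) := by congr 1; ring
    rw [goalshape, goalshape2]
    linarith

lemma one_lt_log_three : (1:ℝ) < Real.log 3 := by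
  have h := log_ratio_ge (x := 2) (y := 3) (by norm_num) (by norm_num)
  norm_num at h
  linarith [Real.log_two_gt_d9]

lemma log_three_pos : (0:ℝ) < Real.log 3 := lt_trans one_pos one_lt_log_three

/-- The Wilkinson-type inequality coming from the bordered determinant chain
plus the Hadamard bound. -/
lemma star_ineq {m n k : ℕ} (A : Matrix (Fin m) (Fin n) ℝ) (piv : ℕ → Fin m × Fin n)
    (hpiv : ∀ r < k, geIter A piv r (piv r).1 (piv r).2 ≠ 0)
    (s : Fin m) (t : Fin n) (i : ℕ) (hik : i ≤ k) :
    (∏ r ∈ Finset.Ioc i k, pivMag A piv r) * |geIter A piv k s t|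
      ≤ Real.sqrt (((k+1-i : ℕ)):ℝ) ^ (k+1-i) * maxAbs (geIter A piv i) ^ (k+1-i) := by
  classical
  set R : ℕ → Fin m := fun j => if h : j < k then (piv j).1 else s with hRdef
  set Cc : ℕ → Fin n := fun j => if h : j < k then (piv j).2 else t with hCdef
  have hR : ∀ j, j < k → R j = (piv j).1 := fun j hj => dif_pos hj
  have hC : ∀ j, j < k → Cc j = (piv j).2 := fun j hj => dif_pos hj
  have hchain := det_chain A piv hpiv R Cc hR hC
  have inst1 := hchain k 0 (by omega)
  have inst2 := hchain i (k - i) (by omega)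
  -- identify the 1×1 determinant
  have hdet0 : |(((geIter A piv (k - 0)).submatrix (fun a : Fin (0+1) => R (k - 0 + ↑a))
      (fun b : Fin (0+1) => Cc (k - 0 + ↑b))).det)| = |geIter A piv k s t| := by
    rw [Matrix.det_fin_one]
    have h0 : (k : ℕ) - 0 + ((0 : Fin 1) : ℕ) = k := by simp
    simp only [Matrix.submatrix_apply, h0]
    have hRk : R k = s := dif_neg (lt_irrefl k)
    have hCk : Cc k = t := dif_neg (lt_irrefl k)
    rw [hRk, hCk]
    norm_num
  rw [hdet0] at inst1
  -- Hadamard bound on the level (k-i) matrix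
  have hkki : k - (k - i) = i := by omega
  set D : Matrix (Fin (k-i+1)) (Fin (k-i+1)) ℝ :=
    (geIter A piv (k - (k-i))).submatrix (fun a : Fin (k-i+1) => R (k - (k-i) + ↑a))
      (fun b : Fin (k-i+1) => Cc (k - (k-i) + ↑b)) with hDdef
  have hcnonneg : 0 ≤ maxAbs (geIter A piv i) := maxAbs_nonneg _ s t
  have hbound : ∀ a b, |D a b| ≤ maxAbs (geIter A piv i) := by
    intro a b
    simp only [hDdef, Matrix.submatrix_apply, hkki]
    exact abs_le_maxAbs _ _ _
  have hhad : |D.det| ≤ Real.sqrt ((k-i+1 : ℕ) : ℝ) ^ (k-i+1)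
      * maxAbs (geIter A piv i) ^ (k-i+1) := by
    have := abs_det_le_hadamard D hcnonneg hbound
    exact_mod_cast this
  -- products of pivots
  have hPpos : ∀ r ∈ Finset.Ioc 0 i, 0 < pivMag A piv r := by
    intro r hr
    simp only [Finset.mem_Ioc] at hr
    have hrk : r - 1 < k := by omega
    exact abs_pos.mpr (hpiv _ hrk)
  have hprodpos : 0 < ∏ r ∈ Finset.Ioc 0 i, pivMag A piv r :=
    Finset.prod_pos hPpos
  have hicc1 : Finset.Icc 1 k = Finset.Ioc 0 k := by
    rw [← Finset.Icc_add_one_left_eq_Ioc, zero_add]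
  have hicc2 : Finset.Icc 1 i = Finset.Ioc 0 i := by
    rw [← Finset.Icc_add_one_left_eq_Ioc, zero_add]
  rw [hicc1] at inst1
  rw [hicc2] at inst2
  have hsplit : (∏ r ∈ Finset.Ioc 0 i, pivMag A piv r) *
      (∏ r ∈ Finset.Ioc i k, pivMag A piv r) = ∏ r ∈ Finset.Ioc 0 k, pivMag A piv r :=
    Finset.prod_Ioc_consecutive _ (Nat.zero_le i) hik
  -- combine
  have key : (∏ r ∈ Finset.Ioc 0 i, pivMag A piv r) *
      ((∏ r ∈ Finset.Ioc i k, pivMag A piv r) * |geIter A piv k s t|)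
      = (∏ r ∈ Finset.Ioc 0 i, pivMag A piv r) * |D.det| := by
    rw [← mul_assoc, hsplit, ← inst1, inst2, hDdef]
  have key2 : (∏ r ∈ Finset.Ioc i k, pivMag A piv r) * |geIter A piv k s t| ≤ |D.det| := by
    have := key
    nlinarith [hprodpos, abs_nonneg D.det]
  have hexp : k - i + 1 = k + 1 - i := by omega
  calc (∏ r ∈ Finset.Ioc i k, pivMag A piv r) * |geIter A piv k s t|
      ≤ |D.det| := key2
    _ ≤ Real.sqrt ((k-i+1 : ℕ) : ℝ) ^ (k-i+1) * maxAbs (geIter A piv i) ^ (k-i+1) := hhad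
    _ = Real.sqrt (((k+1-i : ℕ)):ℝ) ^ (k+1-i) * maxAbs (geIter A piv i) ^ (k+1-i) := by
        rw [hexp]

/-- **Example 2 (poor early pivots, good late pivots).** If the pivot qualities are
`β_r = min(1/log(k-r+2), 1)` for `1 ≤ r ≤ k`, then
`ρ_k(A) ≤ 2 (log(k+2))² (∏_{r=1}^{k-1} (log(r+2))^{1/r}) √k k^{(1/4) log k}`. -/
theorem ge_growth_logarithmic_pivot_quality
    (m n k : ℕ) (A : Matrix (Fin m) (Fin n) ℝ) (hA : A ≠ 0)
    (hk : 3 ≤ k) (hkmn : k ≤ min m n)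
    (piv : ℕ → Fin m × Fin n)
    (hpiv : ∀ r < k, geIter A piv r (piv r).1 (piv r).2 ≠ 0)
    (β : ℕ → ℝ)
    (hβval : ∀ r, 1 ≤ r → r ≤ k →
      β r = min (Real.log ((k : ℝ) - (r : ℝ) + 2))⁻¹ 1)
    (hβdef : ∀ r, 1 ≤ r → r ≤ k →
      β r = pivMag A piv r / maxAbs (geIter A piv (r - 1))) :
    maxAbs (geIter A piv k) / maxAbs A ≤
      2 * (Real.log ((k : ℝ) + 2)) ^ 2 *
        (∏ r ∈ Finset.Icc 1 (k - 1), (Real.log ((r : ℝ) + 2)) ^ ((r : ℝ))⁻¹) *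
        Real.sqrt k * (k : ℝ) ^ ((1 / 4 : ℝ) * Real.log k) := by
  classical
  have hm3 : 3 ≤ m := le_trans hk (le_trans hkmn (min_le_left m n))
  have hn3 : 3 ≤ n := le_trans hk (le_trans hkmn (min_le_right m n))
  have hm0 : 0 < m := by omega
  have hn0 : 0 < n := by omega
  have hkR : (3:ℝ) ≤ (k:ℝ) := by exact_mod_cast hk
  -- positivity of maxAbs A
  have hM0pos : 0 < maxAbs A := by
    have : ∃ s0 t0, A s0 t0 ≠ 0 := by
      by_contra hcon
      push_neg at hcon
      exact hA (by ext s0 t0; simpa using hcon s0 t0)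
    obtain ⟨s0, t0, h0⟩ := this
    exact lt_of_lt_of_le (abs_pos.mpr h0) (abs_le_maxAbs A s0 t0)
  -- RHS nonnegativity pieces
  have hRHS_f1 : (0:ℝ) < Real.log ((k:ℝ)+2) := Real.log_pos (by linarith)
  have hRHS_f2 : (0:ℝ) < ∏ r ∈ Finset.Icc 1 (k - 1), (Real.log ((r : ℝ) + 2)) ^ ((r : ℝ))⁻¹ := by
    apply Finset.prod_pos
    intro r hr
    simp only [Finset.mem_Icc] at hr
    have : (1:ℝ) ≤ r := by exact_mod_cast hr.1
    exact Real.rpow_pos_of_pos (Real.log_pos (by linarith)) _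
  have hk0R : (0:ℝ) < (k:ℝ) := by linarith
  have hRHS_f3 : (0:ℝ) < Real.sqrt k := Real.sqrt_pos.mpr hk0R
  have hRHS_f4 : (0:ℝ) < (k:ℝ) ^ ((1 / 4 : ℝ) * Real.log k) := Real.rpow_pos_of_pos hk0R _
  have hRHSpos : (0:ℝ) < 2 * (Real.log ((k : ℝ) + 2)) ^ 2 *
        (∏ r ∈ Finset.Icc 1 (k - 1), (Real.log ((r : ℝ) + 2)) ^ ((r : ℝ))⁻¹) *
        Real.sqrt k * (k : ℝ) ^ ((1 / 4 : ℝ) * Real.log k) := by positivity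
  -- degenerate case
  rcases eq_or_ne (maxAbs (geIter A piv k)) 0 with hMk0 | hMkne
  · rw [hMk0, zero_div]
    exact le_of_lt hRHSpos
  have hMknn : 0 ≤ maxAbs (geIter A piv k) :=
    maxAbs_nonneg _ ⟨0, hm0⟩ ⟨0, hn0⟩
  have hMkpos : 0 < maxAbs (geIter A piv k) := lt_of_le_of_ne hMknn (Ne.symm hMkne)
  obtain ⟨s, t, hst⟩ := exists_maxAbs (geIter A piv k) hm0 hn0
  -- pivot positivity
  have hPpos : ∀ r, 1 ≤ r → r ≤ k → 0 < pivMag A piv r := by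
    intro r h1 h2
    exact abs_pos.mpr (hpiv _ (by omega))
  have hMipos : ∀ i, i < k → 0 < maxAbs (geIter A piv i) := by
    intro i hi
    exact lt_of_lt_of_le (abs_pos.mpr (hpiv i hi)) (abs_le_maxAbs _ _ _)
  -- the lambda (log of inverse pivot quality)
  set Lam : ℕ → ℝ := fun r =>
    if r < k then Real.log (Real.log (((k - r : ℕ):ℝ) + 2)) else 0 with hLamdef
  have hMir : ∀ r, 1 ≤ r → r ≤ k →
      Real.log (maxAbs (geIter A piv (r-1))) = Real.log (pivMag A piv r) + Lam r := by
    intro r h1 h2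
    have hβ1 := hβval r h1 h2
    have hβ2 := hβdef r h1 h2
    have hMpos := hMipos (r-1) (by omega)
    have hPp := hPpos r h1 h2
    by_cases hrk : r < k
    · have hcast : ((k - r : ℕ):ℝ) = (k:ℝ) - (r:ℝ) := by
        push_cast [Nat.cast_sub h2]
        ring
      have hge3 : (3:ℝ) ≤ (k:ℝ) - (r:ℝ) + 2 := by
        have : (r:ℝ) + 1 ≤ (k:ℝ) := by exact_mod_cast hrk
        linarith
      have hL1 : 1 < Real.log ((k:ℝ) - (r:ℝ) + 2) :=
        lt_of_lt_of_le one_lt_log_three (Real.log_le_log (by norm_num) hge3)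
      have hβeq : β r = (Real.log ((k:ℝ) - (r:ℝ) + 2))⁻¹ := by
        rw [hβ1, min_eq_left (inv_le_one_of_one_le₀ (le_of_lt hL1))]
      have hkey : pivMag A piv r / maxAbs (geIter A piv (r-1))
          = (Real.log ((k:ℝ) - (r:ℝ) + 2))⁻¹ := by rw [← hβ2, hβeq]
      have hLpos : (0:ℝ) < Real.log ((k:ℝ) - (r:ℝ) + 2) := by linarith
      have hM : maxAbs (geIter A piv (r-1))
          = pivMag A piv r * Real.log ((k:ℝ) - (r:ℝ) + 2) := by
        field_simp at hkey
        linarith [hkey]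
      rw [hM, Real.log_mul (ne_of_gt hPp) (ne_of_gt hLpos), hLamdef]
      simp only [if_pos hrk, hcast]
    · have hrk' : r = k := by omega
      have he2 : (k:ℝ) - (r:ℝ) + 2 = 2 := by rw [hrk']; ring
      have hinv : (1:ℝ) ≤ (Real.log 2)⁻¹ := by
        rw [le_inv_comm₀ one_pos (Real.log_pos (by norm_num))]
        simp only [inv_one]
        linarith [Real.log_two_lt_d9]
      have hβeq : β r = 1 := by
        rw [hβ1, he2, min_eq_right hinv]
      have hkey : pivMag A piv r / maxAbs (geIter A piv (r-1)) = 1 := by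
        rw [← hβ2, hβeq]
      have hM : maxAbs (geIter A piv (r-1)) = pivMag A piv r := by
        field_simp at hkey
        linarith [hkey]
      rw [hM, hLamdef]
      simp [hrk]
  -- telescope setup
  set Sf : ℕ → ℝ := fun i =>
    (∑ r ∈ Finset.Ioc i k, Real.log (pivMag A piv r))
      + Real.log (maxAbs (geIter A piv k)) with hSdef
  set cf : ℕ → ℝ := fun i => Real.log (((k+1-i : ℕ)):ℝ) / 2 + Lam (i+1) with hcdef
  -- log of the star inequality
  have hlogstar : ∀ i, i ≤ k → Sf i ≤
      ((k:ℝ) + 1 - i) * (Real.log (((k+1-i : ℕ)):ℝ) / 2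
        + Real.log (maxAbs (geIter A piv i))) := by
    intro i hik
    have hstar := star_ineq A piv hpiv s t i hik
    rw [← hst] at hstar
    have hProdPos : (0:ℝ) < ∏ r ∈ Finset.Ioc i k, pivMag A piv r := by
      apply Finset.prod_pos
      intro r hr
      simp only [Finset.mem_Ioc] at hr
      exact hPpos r (by omega) hr.2
    have hqpos : (0:ℝ) < ((k+1-i : ℕ):ℝ) := by
      have : 1 ≤ k + 1 - i := by omega
      exact_mod_cast Nat.lt_of_lt_of_le Nat.zero_lt_one this
    have hMii : 0 ≤ maxAbs (geIter A piv i) := maxAbs_nonneg _ s t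
    rcases eq_or_lt_of_le hMii with hMi0 | hMipos'
    · exfalso
      have : (∏ r ∈ Finset.Ioc i k, pivMag A piv r) * maxAbs (geIter A piv k) ≤ 0 := by
        calc (∏ r ∈ Finset.Ioc i k, pivMag A piv r) * maxAbs (geIter A piv k)
            ≤ Real.sqrt (((k+1-i : ℕ)):ℝ) ^ (k+1-i) * maxAbs (geIter A piv i) ^ (k+1-i) :=
              hstar
          _ = 0 := by
              rw [← hMi0]
              rw [zero_pow (by omega : k+1-i ≠ 0), mul_zero]
      nlinarith [hProdPos, hMkpos]
    have hlog_le := Real.log_le_log (by positivity) hstar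
    have hlhs : Real.log ((∏ r ∈ Finset.Ioc i k, pivMag A piv r)
        * maxAbs (geIter A piv k)) = Sf i := by
      rw [Real.log_mul (ne_of_gt hProdPos) (ne_of_gt hMkpos)]
      rw [Real.log_prod]
      intro r hr
      simp only [Finset.mem_Ioc] at hr
      exact ne_of_gt (hPpos r (by omega) hr.2)
    have hrhs : Real.log (Real.sqrt (((k+1-i : ℕ)):ℝ) ^ (k+1-i)
        * maxAbs (geIter A piv i) ^ (k+1-i))
        = ((k+1-i : ℕ):ℝ) * (Real.log (((k+1-i : ℕ)):ℝ) / 2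
          + Real.log (maxAbs (geIter A piv i))) := by
      rw [Real.log_mul (pow_ne_zero _ (ne_of_gt (Real.sqrt_pos.mpr hqpos)))
        (pow_ne_zero _ (ne_of_gt hMipos'))]
      rw [Real.log_pow, Real.log_pow, Real.log_sqrt (le_of_lt hqpos)]
      ring
    have hcast2 : ((k+1-i : ℕ):ℝ) = (k:ℝ) + 1 - i := by
      push_cast [Nat.cast_sub (by omega : i ≤ k + 1)]
      ring
    rw [hlhs, hrhs, hcast2] at hlog_le
    rw [← hcast2] at hlog_le ⊢
    exact hlog_le
  -- telescope hypothesis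
  have htel_hyp : ∀ i, i < k → Sf i ≤ ((k:ℝ) + 1 - i) * ((Sf i - Sf (i+1)) + cf i) := by
    intro i hik
    have h1 := hlogstar i (le_of_lt hik)
    have hdiff : Sf i - Sf (i+1) = Real.log (pivMag A piv (i+1)) := by
      have hsetdecomp : Finset.Ioc i k = Finset.cons (i+1) (Finset.Ioc (i+1) k)
          (by simp) := by
        rw [← Finset.Icc_eq_cons_Ioc (by omega : i + 1 ≤ k), Finset.Icc_add_one_left_eq_Ioc]
      simp only [hSdef]
      rw [hsetdecomp, Finset.sum_cons]
      ring
    have hMi : Real.log (maxAbs (geIter A piv i))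
        = Real.log (pivMag A piv (i+1)) + Lam (i+1) := by
      have := hMir (i+1) (by omega) (by omega)
      simpa using this
    rw [hMi] at h1
    rw [hdiff, hcdef]
    calc Sf i ≤ ((k:ℝ) + 1 - i) * (Real.log (((k+1-i : ℕ)):ℝ) / 2
          + (Real.log (pivMag A piv (i+1)) + Lam (i+1))) := h1
      _ = ((k:ℝ) + 1 - i) * (Real.log (pivMag A piv (i+1))
          + (Real.log (((k+1-i : ℕ)):ℝ) / 2 + Lam (i+1))) := by ring
  have htel := wilkinson_telescope k Sf cf htel_hyp
  -- Sf k = log Mk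
  have hSfk : Sf k = Real.log (maxAbs (geIter A piv k)) := by
    simp [hSdef]
  -- Sf 0 bound
  have hS0 : Sf 0 / ((k:ℝ)+1) ≤ Real.log (((k+1 : ℕ)):ℝ) / 2 + Real.log (maxAbs A) := by
    have h1 := hlogstar 0 (by omega)
    have hgeq : geIter A piv 0 = A := rfl
    rw [hgeq] at h1
    have hcast0 : ((k+1-0 : ℕ)) = (k+1 : ℕ) := by omega
    rw [hcast0] at h1
    have hkp1 : (0:ℝ) < (k:ℝ) + 1 := by linarith
    rw [div_le_iff₀ hkp1]
    calc Sf 0 ≤ ((k:ℝ) + 1 - (0:ℕ)) * (Real.log (((k+1 : ℕ)):ℝ) / 2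
          + Real.log (maxAbs A)) := h1
      _ = (Real.log (((k+1 : ℕ)):ℝ) / 2 + Real.log (maxAbs A)) * ((k:ℝ) + 1) := by
          push_cast
          ring
  -- rearrange the sum of cf
  have hreflect : ∑ i ∈ Finset.range k, cf i / ((k:ℝ) - i)
      = ∑ j ∈ Finset.range k, cf (k - 1 - j) / ((k:ℝ) - ((k - 1 - j : ℕ):ℝ)) := by
    exact (Finset.sum_range_reflect (fun i => cf i / ((k:ℝ) - i)) k).symm
  have hterm : ∀ j, j < k → cf (k - 1 - j) / ((k:ℝ) - ((k - 1 - j : ℕ):ℝ))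
      = (Real.log ((j:ℝ) + 2) / 2) / ((j:ℝ) + 1) + Lam (k - j) / ((j:ℝ) + 1) := by
    intro j hj
    have hc1 : (k + 1 - (k - 1 - j) : ℕ) = j + 2 := by omega
    have hc2 : ((k - 1 - j : ℕ):ℝ) = (k:ℝ) - 1 - j := by
      push_cast [Nat.cast_sub (by omega : j ≤ k - 1), Nat.cast_sub (by omega : 1 ≤ k)]
      ring
    have hc3 : (k - 1 - j + 1 : ℕ) = k - j := by omega
    have hc4 : ((j + 2 : ℕ):ℝ) = (j:ℝ) + 2 := by push_cast; ring
    simp only [hcdef, hc1, hc3, hc2, hc4]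
    have hd : (k:ℝ) - ((k:ℝ) - 1 - j) = (j:ℝ) + 1 := by ring
    rw [hd]
    ring
  have hLam_zero : Lam k = 0 := by simp [hLamdef]
  have hLamsum : ∑ j ∈ Finset.range k, Lam (k - j) / ((j:ℝ) + 1)
      ≤ ∑ r ∈ Finset.Icc 1 (k-1), ((r:ℝ))⁻¹ * Real.log (Real.log ((r:ℝ) + 2)) := by
    have hsplit : ∑ j ∈ Finset.range k, Lam (k - j) / ((j:ℝ) + 1)
        = Lam k / ((0:ℝ) + 1) + ∑ j ∈ Finset.Ico 1 k, Lam (k - j) / ((j:ℝ) + 1) := by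
      rw [Finset.range_eq_Ico,
        ← Finset.sum_Ico_consecutive (fun j => Lam (k - j) / ((j:ℝ) + 1))
          (by omega : (0:ℕ) ≤ 1) (by omega : 1 ≤ k)]
      congr 1
      · rw [show Finset.Ico 0 1 = {0} by rfl]
        simp
    rw [hsplit, hLam_zero]
    have h0 : (0:ℝ) / ((0:ℝ) + 1) = 0 := by norm_num
    rw [h0, zero_add]
    have hIcoIcc : Finset.Ico 1 k = Finset.Icc 1 (k-1) := by
      rw [← Finset.Ico_add_one_right_eq_Icc]
      congr 1
      omega
    rw [hIcoIcc]
    apply Finset.sum_le_sum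
    intro j hj
    simp only [Finset.mem_Icc] at hj
    have hj1 : 1 ≤ j := hj.1
    have hjk : j < k := by omega
    have hLamval : Lam (k - j) = Real.log (Real.log ((j:ℝ) + 2)) := by
      have hlt : k - j < k := by omega
      have hkkj : (k - (k - j) : ℕ) = j := by omega
      simp only [hLamdef, if_pos hlt, hkkj]
    rw [hLamval]
    have hjR : (1:ℝ) ≤ (j:ℝ) := by exact_mod_cast hj1
    have hloglognn : 0 ≤ Real.log (Real.log ((j:ℝ) + 2)) := by
      apply Real.log_nonneg
      have : (3:ℝ) ≤ (j:ℝ) + 2 := by linarith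
      linarith [le_trans (le_of_lt one_lt_log_three) (Real.log_le_log (by norm_num) this)]
    rw [div_eq_mul_inv, mul_comm]
    apply mul_le_mul_of_nonneg_right _ hloglognn
    apply inv_anti₀ (by linarith)
    linarith
  -- the main log bound
  have hmainlog : Real.log (maxAbs (geIter A piv k)) ≤ Real.log (maxAbs A)
      + Real.log (((k+1 : ℕ)):ℝ) / 2
      + ∑ j ∈ Finset.range k, (Real.log ((j:ℝ) + 2) / 2) / ((j:ℝ) + 1)
      + ∑ r ∈ Finset.Icc 1 (k-1), ((r:ℝ))⁻¹ * Real.log (Real.log ((r:ℝ) + 2)) := by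
    have hsum_eq : ∑ i ∈ Finset.range k, cf i / ((k:ℝ) - i)
        = ∑ j ∈ Finset.range k, ((Real.log ((j:ℝ) + 2) / 2) / ((j:ℝ) + 1)
          + Lam (k - j) / ((j:ℝ) + 1)) := by
      rw [hreflect]
      apply Finset.sum_congr rfl
      intro j hj
      simp only [Finset.mem_range] at hj
      exact hterm j hj
    rw [hSfk] at htel
    rw [hsum_eq, Finset.sum_add_distrib] at htel
    calc Real.log (maxAbs (geIter A piv k))
        ≤ Sf 0 / ((k:ℝ)+1) + (∑ j ∈ Finset.range k, (Real.log ((j:ℝ) + 2) / 2) / ((j:ℝ) + 1)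
          + ∑ j ∈ Finset.range k, Lam (k - j) / ((j:ℝ) + 1)) := htel
      _ ≤ _ := by
          have := hLamsum
          have := hS0
          linarith
  -- analytic bound
  have hanalytic := analytic_core k hk
  -- log of the RHS
  have hRHSlog : Real.log (2 * (Real.log ((k : ℝ) + 2)) ^ 2 *
        (∏ r ∈ Finset.Icc 1 (k - 1), (Real.log ((r : ℝ) + 2)) ^ ((r : ℝ))⁻¹) *
        Real.sqrt k * (k : ℝ) ^ ((1 / 4 : ℝ) * Real.log k))
      = Real.log 2 + 2 * Real.log (Real.log ((k:ℝ) + 2))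
        + ∑ r ∈ Finset.Icc 1 (k-1), ((r:ℝ))⁻¹ * Real.log (Real.log ((r:ℝ) + 2))
        + Real.log ((k:ℝ)) / 2 + ((1/4 : ℝ) * Real.log k) * Real.log k := by
    rw [Real.log_mul (by positivity) (ne_of_gt hRHS_f4),
      Real.log_mul (by positivity) (ne_of_gt hRHS_f3),
      Real.log_mul (by positivity) (ne_of_gt hRHS_f2),
      Real.log_mul (by norm_num) (by positivity)]
    rw [Real.log_pow, Real.log_sqrt (le_of_lt hk0R), Real.log_rpow hk0R]
    rw [Real.log_prod]
    · have : ∀ r ∈ Finset.Icc 1 (k-1),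
          Real.log ((Real.log ((r:ℝ) + 2)) ^ ((r : ℝ))⁻¹)
            = ((r:ℝ))⁻¹ * Real.log (Real.log ((r:ℝ) + 2)) := by
        intro r hr
        simp only [Finset.mem_Icc] at hr
        have : (1:ℝ) ≤ (r:ℝ) := by exact_mod_cast hr.1
        rw [Real.log_rpow (Real.log_pos (by linarith))]
      rw [Finset.sum_congr rfl this]
      push_cast
      ring
    · intro r hr
      simp only [Finset.mem_Icc] at hr
      have : (1:ℝ) ≤ (r:ℝ) := by exact_mod_cast hr.1
      exact ne_of_gt (Real.rpow_pos_of_pos (Real.log_pos (by linarith)) _)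
  -- conclude
  have hdivpos : 0 < maxAbs (geIter A piv k) / maxAbs A := div_pos hMkpos hM0pos
  rw [← Real.log_le_log_iff hdivpos hRHSpos]
  rw [Real.log_div (ne_of_gt hMkpos) (ne_of_gt hM0pos), hRHSlog]
  have hcastk1 : ((k+1 : ℕ):ℝ) = (k:ℝ) + 1 := by push_cast; ring
  rw [hcastk1] at hmainlog
  have hinvk : (0:ℝ) < 1/(k:ℝ) := by positivity
  linarith [hmainlog, hanalytic]
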